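/- Let Ω, Ω̃ ⊆ ℝ² be nonempty open sets with Ω ⊆ Ω̃, φ : Ω → Ω̃ a C¹ diffeomorphism with everywhere positive Jacobian determinant, and A : Ω → (real symmetric 2×2 matrices) agreed with φ. Suppose M > 0 satisfies det Dφ(z) ≥ 1/M for every z ∈ Ω, define Λ = inf { (∫_Ω ⟨A(z)∇f(z),∇f(z)⟩ dz) / (∫_Ω |f(z)|² dz) : f continuously differentiable with compact support in Ω, f ≢ 0 } and λ = inf { (∫_{Ω̃} |∇g(w)|² dw) / (∫_{Ω̃} |g(w)|² dw) : g continuously differentiable with compact support in Ω̃, g ≢ 0 }, and assume λ > 0. Then Λ − λ ≥ ((1 − M)/M) · λ. -/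

import Mathlib

open MeasureTheory Set Matrix

noncomputable section

set_option maxHeartbeats 1000000 in
open RealInnerProductSpace in
/-- estimate for the variation of the first Dirichlet eigenvalue under
quasiconformal deformation of the domain: if `Ω ⊆ Ω̃`, `det Dφ ≥ 1/M` on `Ω` and `λ, Λ` are the
Rayleigh quotient infima on `Ω̃` (Laplacian) and on `Ω` (operator `L_A`), then
`Λ − λ ≥ ((1 − M)/M)·λ`. -/
theorem stmt9 (Ω Ω' : Set (EuclideanSpace ℝ (Fin 2))) (hΩ : IsOpen Ω) (hΩ' : IsOpen Ω')
    (hΩne : Ω.Nonempty) (hΩ'ne : Ω'.Nonempty) (hsub : Ω ⊆ Ω')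
    (φ ψ : EuclideanSpace ℝ (Fin 2) → EuclideanSpace ℝ (Fin 2))
    (hbij : Set.BijOn φ Ω Ω') (hinv : ∀ z ∈ Ω, ψ (φ z) = z)
    (hφ : ContDiffOn ℝ 1 φ Ω) (hψ : ContDiffOn ℝ 1 ψ Ω')
    (J : EuclideanSpace ℝ (Fin 2) → Matrix (Fin 2) (Fin 2) ℝ)
    (hJ : ∀ z ∈ Ω, HasFDerivAt φ (Matrix.toEuclideanCLM (𝕜 := ℝ) (J z)) z)
    (hpos : ∀ z ∈ Ω, 0 < (J z).det)
    (A : EuclideanSpace ℝ (Fin 2) → Matrix (Fin 2) (Fin 2) ℝ)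
    (hsym : ∀ z ∈ Ω, (A z).IsSymm)
    (hagree : ∀ z ∈ Ω, J z * A z * (J z)ᵀ = (J z).det • (1 : Matrix (Fin 2) (Fin 2) ℝ))
    (M : ℝ) (hM : 0 < M) (hMdet : ∀ z ∈ Ω, 1 / M ≤ (J z).det)
    (Lam lam : ℝ)
    (hLam : Lam = sInf {q : ℝ | ∃ f : EuclideanSpace ℝ (Fin 2) → ℝ,
      ContDiff ℝ 1 f ∧ HasCompactSupport f ∧ tsupport f ⊆ Ω ∧ f ≠ 0 ∧
      q = (∫ z in Ω, (inner ℝ (Matrix.toEuclideanCLM (𝕜 := ℝ) (A z) (gradient f z))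
            (gradient f z) : ℝ)) / ∫ z in Ω, |f z| ^ 2})
    (hlam : lam = sInf {q : ℝ | ∃ g : EuclideanSpace ℝ (Fin 2) → ℝ,
      ContDiff ℝ 1 g ∧ HasCompactSupport g ∧ tsupport g ⊆ Ω' ∧ g ≠ 0 ∧
      q = (∫ w in Ω', ‖gradient g w‖ ^ 2) / ∫ w in Ω', |g w| ^ 2})
    (hlampos : 0 < lam) :
    Lam - lam ≥ ((1 - M) / M) * lam := by
  classical
  have himg : φ '' Ω = Ω' := hbij.image_eq
  have hdet : ∀ z ∈ Ω, (Matrix.toEuclideanCLM (𝕜 := ℝ) (J z)).det = (J z).det := by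
    intro z hz
    show LinearMap.det _ = _
    rw [Matrix.coe_toEuclideanCLM_eq_toEuclideanLin, Matrix.toEuclideanLin_eq_toLin,
      LinearMap.det_toLin]
  -- bddBelow for the λ-set
  have hTbdd : BddBelow {q : ℝ | ∃ g : EuclideanSpace ℝ (Fin 2) → ℝ,
      ContDiff ℝ 1 g ∧ HasCompactSupport g ∧ tsupport g ⊆ Ω' ∧ g ≠ 0 ∧
      q = (∫ w in Ω', ‖gradient g w‖ ^ 2) / ∫ w in Ω', |g w| ^ 2} := by
    refine ⟨0, fun q hq => ?_⟩
    obtain ⟨g, -, -, -, -, rfl⟩ := hq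
    exact div_nonneg (integral_nonneg fun w => by positivity)
      (integral_nonneg fun w => by positivity)
  -- the key bound: every element of the Λ-set is at least lam / M
  have hbound : ∀ q ∈ {q : ℝ | ∃ f : EuclideanSpace ℝ (Fin 2) → ℝ,
      ContDiff ℝ 1 f ∧ HasCompactSupport f ∧ tsupport f ⊆ Ω ∧ f ≠ 0 ∧
      q = (∫ z in Ω, (inner ℝ (Matrix.toEuclideanCLM (𝕜 := ℝ) (A z) (gradient f z))
            (gradient f z) : ℝ)) / ∫ z in Ω, |f z| ^ 2}, lam / M ≤ q := by
    rintro q ⟨f, hf1, hfc, hfsupp, hfne, rfl⟩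
    -- the transplanted function g on Ω'
    set g : EuclideanSpace ℝ (Fin 2) → ℝ := fun w => if w ∈ Ω' then f (ψ w) else 0 with hgdef
    have heq : ∀ z ∈ Ω, g (φ z) = f z := by
      intro z hz
      have : φ z ∈ Ω' := himg ▸ mem_image_of_mem φ hz
      simp only [hgdef, if_pos this, hinv z hz]
    set K' : Set (EuclideanSpace ℝ (Fin 2)) := φ '' (tsupport f) with hK'def
    have hK'c : IsCompact K' := hfc.image_of_continuousOn (hφ.continuousOn.mono hfsupp)
    have hK'sub : K' ⊆ Ω' := by
      rw [← himg]; exact image_mono hfsupp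
    have g0 : ∀ u, u ∉ K' → g u = 0 := by
      intro u hu
      by_cases h : u ∈ Ω'
      · rw [← himg] at h
        obtain ⟨z, hz, rfl⟩ := h
        have hzK : z ∉ tsupport f := fun hzK => hu (mem_image_of_mem φ hzK)
        rw [heq z hz]
        exact image_eq_zero_of_notMem_tsupport hzK
      · simp only [hgdef, if_neg h]
    have hg1 : ContDiff ℝ 1 g := by
      rw [contDiff_iff_contDiffAt]
      intro w
      by_cases hw : w ∈ Ω'
      · have hψw : ContDiffAt ℝ 1 ψ w := hψ.contDiffAt (hΩ'.mem_nhds hw)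
        have hcomp : ContDiffAt ℝ 1 (fun u => f (ψ u)) w := hf1.contDiffAt.comp w hψw
        apply hcomp.congr_of_eventuallyEq
        filter_upwards [hΩ'.mem_nhds hw] with u hu
        simp only [hgdef, if_pos hu]
      · have hwK : w ∉ K' := fun h => hw (hK'sub h)
        have hz : ContDiffAt ℝ 1 (fun _ : EuclideanSpace ℝ (Fin 2) => (0:ℝ)) w :=
          contDiffAt_const
        apply hz.congr_of_eventuallyEq
        filter_upwards [hK'c.isClosed.isOpen_compl.mem_nhds hwK] with u hu
        exact g0 u hu
    have hgsupp0 : Function.support g ⊆ K' := fun x hx => by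
      by_contra h; exact hx (g0 x h)
    have hgc : HasCompactSupport g := HasCompactSupport.intro hK'c g0
    have hgsupp : tsupport g ⊆ Ω' :=
      (closure_minimal hgsupp0 hK'c.isClosed).trans hK'sub
    obtain ⟨z₀, hz₀⟩ : ∃ z, f z ≠ 0 := by
      by_contra h; push_neg at h; exact hfne (funext h)
    have hz₀Ω : z₀ ∈ Ω := hfsupp (subset_tsupport f hz₀)
    have hgne : g ≠ 0 := by
      intro h0
      have := heq z₀ hz₀Ω
      rw [h0] at this
      exact hz₀ (by simpa using this.symm)
    -- change of variables
    have cov : ∀ F : EuclideanSpace ℝ (Fin 2) → ℝ,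
        ∫ w in Ω', F w = ∫ z in Ω,
          |(Matrix.toEuclideanCLM (𝕜 := ℝ) (J z)).det| • F (φ z) := by
      intro F
      rw [← himg]
      exact integral_image_eq_integral_abs_det_fderiv_smul volume hΩ.measurableSet
        (fun z hz => (hJ z hz).hasFDerivWithinAt) hbij.injOn F
    have hDg : (∫ w in Ω', |g w| ^ 2) = ∫ z in Ω, (J z).det * |f z| ^ 2 := by
      rw [cov]
      refine setIntegral_congr_fun hΩ.measurableSet fun z hz => ?_
      rw [hdet z hz, heq z hz, abs_of_pos (hpos z hz), smul_eq_mul]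
    -- pointwise chain rule identity
    have hpointwise : ∀ z ∈ Ω,
        |(Matrix.toEuclideanCLM (𝕜 := ℝ) (J z)).det| • ‖gradient g (φ z)‖ ^ 2 =
        (inner ℝ (Matrix.toEuclideanCLM (𝕜 := ℝ) (A z) (gradient f z)) (gradient f z) : ℝ) := by
      intro z hz
      have hgd : HasFDerivAt g (fderiv ℝ g (φ z)) (φ z) :=
        (hg1.differentiable one_ne_zero (φ z)).hasFDerivAt
      have hcomp : HasFDerivAt (g ∘ φ)
          ((fderiv ℝ g (φ z)).comp (Matrix.toEuclideanCLM (𝕜 := ℝ) (J z))) z :=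
        hgd.comp z (hJ z hz)
      have heve : f =ᶠ[nhds z] g ∘ φ :=
        Filter.eventuallyEq_of_mem (hΩ.mem_nhds hz) fun z' hz' => (heq z' hz').symm
      have hfd : HasFDerivAt f
          ((fderiv ℝ g (φ z)).comp (Matrix.toEuclideanCLM (𝕜 := ℝ) (J z))) z :=
        hcomp.congr_of_eventuallyEq heve
      set u : EuclideanSpace ℝ (Fin 2) := gradient g (φ z) with hu
      have hadj : Matrix.toEuclideanCLM (𝕜 := ℝ) ((J z)ᵀ) =
          ContinuousLinearMap.adjoint (Matrix.toEuclideanCLM (𝕜 := ℝ) (J z)) := by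
        have hstar : star (J z) = (J z)ᵀ := by
          ext i j
          simp [Matrix.star_eq_conjTranspose, Matrix.conjTranspose_apply]
        rw [← ContinuousLinearMap.star_eq_adjoint, ← map_star, hstar]
      have hgradf : gradient f z = Matrix.toEuclideanCLM (𝕜 := ℝ) ((J z)ᵀ) u := by
        refine ext_inner_right ℝ fun v => ?_
        have h1 : ⟪gradient f z, v⟫ = fderiv ℝ f z v :=
          InnerProductSpace.toDual_symm_apply
        have h2 : ⟪u, (Matrix.toEuclideanCLM (𝕜 := ℝ) (J z)) v⟫ =
            fderiv ℝ g (φ z) ((Matrix.toEuclideanCLM (𝕜 := ℝ) (J z)) v) :=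
          InnerProductSpace.toDual_symm_apply
        rw [h1, hfd.fderiv, hadj, ContinuousLinearMap.adjoint_inner_left, h2]
        try rfl
      have hmul : Matrix.toEuclideanCLM (𝕜 := ℝ) (J z)
            ((Matrix.toEuclideanCLM (𝕜 := ℝ) (A z))
              ((Matrix.toEuclideanCLM (𝕜 := ℝ) ((J z)ᵀ)) u)) =
          Matrix.toEuclideanCLM (𝕜 := ℝ) (J z * A z * (J z)ᵀ) u := by
        simp [_root_.map_mul]
      have hcalc : (inner ℝ (Matrix.toEuclideanCLM (𝕜 := ℝ) (A z) (gradient f z))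
          (gradient f z) : ℝ) = (J z).det * ‖u‖ ^ 2 := by
        rw [hgradf]
        rw [hadj]
        rw [ContinuousLinearMap.adjoint_inner_right]
        rw [← hadj, hmul, hagree z hz]
        rw [_root_.map_smul, _root_.map_one, ContinuousLinearMap.smul_apply,
          ContinuousLinearMap.one_apply, real_inner_smul_left, real_inner_self_eq_norm_sq]
      rw [hcalc, hdet z hz, abs_of_pos (hpos z hz), smul_eq_mul]
    have hQg : (∫ w in Ω', ‖gradient g w‖ ^ 2) =
        ∫ z in Ω, (inner ℝ (Matrix.toEuclideanCLM (𝕜 := ℝ) (A z) (gradient f z))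
          (gradient f z) : ℝ) := by
      rw [cov]
      exact setIntegral_congr_fun hΩ.measurableSet fun z hz => hpointwise z hz
    -- positivity of ∫ |f|²
    have hfcont : Continuous f := hf1.continuous
    have hsqcont : Continuous fun z => |f z| ^ 2 := by fun_prop
    have hsqcs : HasCompactSupport fun z => |f z| ^ 2 := by
      have : HasCompactSupport ((fun x : ℝ => |x| ^ 2) ∘ f) := hfc.comp_left (by simp)
      exact this
    have hsqint : IntegrableOn (fun z => |f z| ^ 2) Ω :=
      (hsqcont.integrable_of_hasCompactSupport hsqcs).integrableOn
    have hNpos : 0 < ∫ z in Ω, |f z| ^ 2 := by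
      rw [setIntegral_pos_iff_support_of_nonneg_ae
        (Filter.Eventually.of_forall fun x => by positivity) hsqint]
      have hsupp_eq : Function.support (fun z => |f z| ^ 2) = Function.support f := by
        ext x; simp [Function.mem_support, pow_eq_zero_iff, abs_eq_zero]
      rw [hsupp_eq]
      have hopen : IsOpen (Function.support f ∩ Ω) := hfcont.isOpen_support.inter hΩ
      have hne : (Function.support f ∩ Ω).Nonempty := ⟨z₀, hz₀, hz₀Ω⟩
      exact hopen.measure_pos volume hne
    -- integrability of det ⬝ |f|²
    have hcontF : ContinuousOn (fun z => (J z).det * |f z| ^ 2) Ω := by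
      have hfderiv : ContinuousOn (fun z => (fderiv ℝ φ z).det * |f z| ^ 2) Ω := by
        have h1 : ContinuousOn (fderiv ℝ φ) Ω :=
          hφ.continuousOn_fderiv_of_isOpen hΩ le_rfl
        exact (ContinuousLinearMap.continuous_det.comp_continuousOn h1).mul
          hsqcont.continuousOn
      refine hfderiv.congr fun z hz => ?_
      show (J z).det * |f z| ^ 2 = (fderiv ℝ φ z).det * |f z| ^ 2
      rw [(hJ z hz).fderiv, hdet z hz]
    have hIF : IntegrableOn (fun z => (J z).det * |f z| ^ 2) Ω := by
      have hIK : IntegrableOn (fun z => (J z).det * |f z| ^ 2) (tsupport f) :=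
        (hcontF.mono hfsupp).integrableOn_compact hfc
      have hIdiff : IntegrableOn (fun z => (J z).det * |f z| ^ 2) (Ω \ tsupport f) := by
        refine (integrableOn_zero (ε' := ℝ)).congr_fun (fun z hz => ?_)
          (hΩ.measurableSet.diff (isClosed_tsupport f).measurableSet)
        simp [image_eq_zero_of_notMem_tsupport hz.2]
      exact (hIdiff.union hIK).mono_set fun x hx => by
        by_cases h : x ∈ tsupport f
        · exact Or.inr h
        · exact Or.inl ⟨hx, h⟩
    have hlow : (1 / M) * ∫ z in Ω, |f z| ^ 2 ≤ ∫ w in Ω', |g w| ^ 2 := by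
      rw [hDg, ← integral_const_mul]
      refine setIntegral_mono_on (hsqint.const_mul _) hIF hΩ.measurableSet fun z hz => ?_
      exact mul_le_mul_of_nonneg_right (hMdet z hz) (by positivity)
    have hDgpos : 0 < ∫ w in Ω', |g w| ^ 2 :=
      lt_of_lt_of_le (by positivity) hlow
    have hQgnn : 0 ≤ ∫ w in Ω', ‖gradient g w‖ ^ 2 :=
      integral_nonneg fun w => by positivity
    -- lam ≤ Rayleigh quotient of g
    have hlamle : lam ≤ (∫ w in Ω', ‖gradient g w‖ ^ 2) / ∫ w in Ω', |g w| ^ 2 := by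
      rw [hlam]
      exact csInf_le hTbdd ⟨g, hg1, hgc, hgsupp, hgne, rfl⟩
    have h1 : lam * ∫ w in Ω', |g w| ^ 2 ≤ ∫ w in Ω', ‖gradient g w‖ ^ 2 :=
      (le_div_iff₀ hDgpos).mp hlamle
    have hND : (∫ z in Ω, |f z| ^ 2) ≤ M * ∫ w in Ω', |g w| ^ 2 := by
      have := mul_le_mul_of_nonneg_left hlow hM.le
      calc (∫ z in Ω, |f z| ^ 2) = M * ((1 / M) * ∫ z in Ω, |f z| ^ 2) := by
            field_simp
        _ ≤ M * ∫ w in Ω', |g w| ^ 2 := this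
    have h2 : lam * ∫ z in Ω, |f z| ^ 2 ≤ M * ∫ w in Ω', ‖gradient g w‖ ^ 2 :=
      calc lam * ∫ z in Ω, |f z| ^ 2
          ≤ lam * (M * ∫ w in Ω', |g w| ^ 2) :=
            mul_le_mul_of_nonneg_left hND hlampos.le
        _ = M * (lam * ∫ w in Ω', |g w| ^ 2) := by ring
        _ ≤ M * ∫ w in Ω', ‖gradient g w‖ ^ 2 :=
            mul_le_mul_of_nonneg_left h1 hM.le
    rw [← hQg]
    rw [div_le_div_iff₀ hM hNpos]
    linarith
  -- nonemptiness of the Λ-set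
  have hSne : {q : ℝ | ∃ f : EuclideanSpace ℝ (Fin 2) → ℝ,
      ContDiff ℝ 1 f ∧ HasCompactSupport f ∧ tsupport f ⊆ Ω ∧ f ≠ 0 ∧
      q = (∫ z in Ω, (inner ℝ (Matrix.toEuclideanCLM (𝕜 := ℝ) (A z) (gradient f z))
            (gradient f z) : ℝ)) / ∫ z in Ω, |f z| ^ 2}.Nonempty := by
    obtain ⟨z₀, hz₀⟩ := hΩne
    obtain ⟨ε, hε, hball⟩ := Metric.isOpen_iff.mp hΩ z₀ hz₀
    have hb1 : (0:ℝ) < ε / 2 := by linarith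
    have hb2 : ε / 2 < 2 * ε / 3 := by linarith
    let b : ContDiffBump z₀ := ⟨ε / 2, 2 * ε / 3, hb1, hb2⟩
    refine ⟨_, (b : EuclideanSpace ℝ (Fin 2) → ℝ), b.contDiff,
      b.hasCompactSupport, ?_, ?_, rfl⟩
    · rw [b.tsupport_eq]
      exact (Metric.closedBall_subset_ball (show (2*ε/3:ℝ) < ε by linarith)).trans hball
    · intro h0
      have : (b : EuclideanSpace ℝ (Fin 2) → ℝ) z₀ = 1 :=
        b.one_of_mem_closedBall (Metric.mem_closedBall_self hb1.le)
      rw [h0] at this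
      simpa using this
  have hLamge : lam / M ≤ Lam := by
    rw [hLam]
    exact le_csInf hSne hbound
  have hkey : ((1 - M) / M) * lam = lam / M - lam := by
    field_simp
  linarith
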